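/- arXiv:1712.05853 — 4 statements merged into one kernel-verified Lean document; each statement's English description precedes it below -/
import Mathlib

section
/- Let m ≥ 2 be an integer, λ ≥ 1, C > 0, and ε ≥ -C·λ^{-2m/(m+1)}. Set b(x) = 1 - (x^{2m}+1)^{-1/m}. Then ∫_{-1}^{1} (λ^{-2m/(m+1)} + |b(x)+ε|)^{-1/2} dx ≤ C'·λ^{(m-1)/(m+1)} for a constant C' depending only on m and C. -/
set_option maxHeartbeats 1000000

lemma aux_rpow_le (m : ℕ) (hm : 2 ≤ m) (t : ℝ) (ht0 : 0 ≤ t) (ht1 : t ≤ 1) :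
    (t + 1) ^ (-(1 : ℝ) / m) ≤ 1 - t / (4 * m) := by
  have hmr : (2 : ℝ) ≤ (m : ℝ) := by exact_mod_cast hm
  have hm0 : (m : ℝ) ≠ 0 := by linarith
  have h1t : (0 : ℝ) < t + 1 := by linarith
  have htm : t / (4 * m) ≤ 1 / 8 := by
    rw [div_le_div_iff₀ (by linarith) (by norm_num)]
    nlinarith
  have hv0 : (0 : ℝ) ≤ 1 - t / (4 * m) := by linarith
  apply le_of_pow_le_pow_left₀ (n := m) (by omega) hv0
  have hpow : ((t + 1) ^ (-(1 : ℝ) / m)) ^ m = (t + 1)⁻¹ := by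
    rw [← Real.rpow_natCast ((t + 1) ^ (-(1 : ℝ) / m)) m, ← Real.rpow_mul h1t.le]
    rw [show (-(1 : ℝ) / m) * m = -1 by field_simp]
    exact Real.rpow_neg_one _
  rw [hpow]
  have hbern : 1 + (m : ℝ) * (-(t / (4 * m))) ≤ (1 + (-(t / (4 * m)))) ^ m := by
    apply one_add_mul_le_pow
    have : 0 ≤ t / (4 * m) := by positivity
    linarith
  have hsimp : (m : ℝ) * (-(t / (4 * m))) = -(t / 4) := by
    field_simp
  have h14 : (t + 1)⁻¹ ≤ 1 - t / 4 := by
    rw [inv_eq_one_div, div_le_iff₀ h1t]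
    nlinarith
  calc (t + 1)⁻¹ ≤ 1 - t / 4 := h14
    _ = 1 + (m : ℝ) * (-(t / (4 * m))) := by rw [hsimp]; ring
    _ ≤ (1 + (-(t / (4 * m)))) ^ m := hbern
    _ = (1 - t / (4 * m)) ^ m := by ring_nf

/-- For `m ≥ 2`, `λ ≥ 1`, `C > 0`, `ε ≥ -C·λ^(-2m/(m+1))`, with
`b(x) = 1 - (x^(2m)+1)^(-1/m)`:
`∫_{-1}^{1} (λ^(-2m/(m+1)) + |b(x)+ε|)^(-1/2) dx ≤ C'·λ^((m-1)/(m+1))`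
for some `C' > 0` depending only on `m` and `C`. -/
theorem stmt_7 (m : ℕ) (hm : 2 ≤ m) (C : ℝ) (hC : 0 < C)
    (b : ℝ → ℝ) (hb : ∀ x, b x = 1 - (x ^ (2 * m) + 1) ^ (-(1 : ℝ) / m)) :
    ∃ C' > 0, ∀ lam : ℝ, 1 ≤ lam → ∀ ε : ℝ,
      -C * lam ^ (-(2 * (m : ℝ)) / (m + 1)) ≤ ε →
      ∫ x in (-1 : ℝ)..1,
          (lam ^ (-(2 * (m : ℝ)) / (m + 1)) + |b x + ε|) ^ (-(1 : ℝ) / 2)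
        ≤ C' * lam ^ (((m : ℝ) - 1) / (m + 1)) := by
  have hmr : (2 : ℝ) ≤ (m : ℝ) := by exact_mod_cast hm
  have hm0 : (m : ℝ) ≠ 0 := by linarith
  have hm1 : (m : ℝ) + 1 ≠ 0 := by linarith
  set R : ℝ := 1 + 8 * m * C with hRdef
  have hR0 : (0 : ℝ) ≤ 8 * m * C := by positivity
  have hR1 : 1 ≤ R := by rw [hRdef]; linarith
  have hRpos : 0 < R := by linarith
  refine ⟨2 * R + 16 * m, by nlinarith, ?_⟩
  intro lam hlam ε hε
  have hlam0 : (0 : ℝ) < lam := by linarith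
  set μ := lam ^ (-(2 * (m : ℝ)) / ((m : ℝ) + 1)) with hμdef
  have hμpos : 0 < μ := Real.rpow_pos_of_pos hlam0 _
  have hμ1 : μ ≤ 1 := Real.rpow_le_one_of_one_le_of_nonpos hlam
    (div_nonpos_of_nonpos_of_nonneg (by linarith) (by linarith))
  set ν := μ ^ ((1 : ℝ) / (2 * m)) with hνdef
  have hνpos : 0 < ν := Real.rpow_pos_of_pos hμpos _
  have hν1 : ν ≤ 1 := Real.rpow_le_one hμpos.le hμ1 (by positivity)
  have hν2m : ν ^ (2 * m) = μ := by
    rw [hνdef, ← Real.rpow_natCast (μ ^ ((1 : ℝ) / (2 * m))) (2 * m),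
      ← Real.rpow_mul hμpos.le]
    rw [show (1 : ℝ) / (2 * m) * ((2 * m : ℕ) : ℝ) = 1 by push_cast; field_simp]
    exact Real.rpow_one μ
  set L := lam ^ (((m : ℝ) - 1) / ((m : ℝ) + 1)) with hLdef
  have hLpos : 0 < L := Real.rpow_pos_of_pos hlam0 _
  have hL1 : 1 ≤ L := Real.one_le_rpow hlam (div_nonneg (by linarith) (by linarith))
  have hA : μ ^ (-(1 : ℝ) / 2) * ν = L := by
    rw [hνdef, hμdef, hLdef, ← Real.rpow_mul hlam0.le, ← Real.rpow_mul hlam0.le,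
      ← Real.rpow_add hlam0]
    congr 1
    field_simp
    ring
  have hB : ν ^ ((1 : ℝ) - m) = L := by
    rw [hνdef, hμdef, hLdef, ← Real.rpow_mul hlam0.le, ← Real.rpow_mul hlam0.le]
    congr 1
    field_simp
    ring
  -- continuity of the integrand
  have hbc : Continuous b := by
    have hbe : b = fun x : ℝ => 1 - (x ^ (2 * m) + 1) ^ (-(1 : ℝ) / m) := funext hb
    rw [hbe]
    apply continuous_const.sub
    apply Continuous.rpow_const
    · continuity
    · intro x
      left
      have h0 : (0 : ℝ) ≤ x ^ (2 * m) := (even_two_mul m).pow_nonneg x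
      show x ^ (2 * m) + 1 ≠ 0
      exact ne_of_gt (by linarith)
  set g : ℝ → ℝ := fun x => (μ + |b x + ε|) ^ (-(1 : ℝ) / 2) with hgdef
  have hbase : ∀ x, 0 < μ + |b x + ε| := fun x => add_pos_of_pos_of_nonneg hμpos (abs_nonneg _)
  have hgc : Continuous g :=
    Continuous.rpow_const (continuous_const.add ((hbc.add continuous_const).abs))
      (fun x => Or.inl (hbase x).ne')
  have hgnonneg : ∀ x, 0 ≤ g x := fun x => Real.rpow_nonneg (hbase x).le _
  have hμs : 0 ≤ μ ^ (-(1 : ℝ) / 2) := Real.rpow_nonneg hμpos.le _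
  have hgle : ∀ x, g x ≤ μ ^ (-(1 : ℝ) / 2) := by
    intro x
    apply Real.rpow_le_rpow_of_nonpos hμpos
      (by have := abs_nonneg (b x + ε); linarith) (by norm_num)
  have hgint : ∀ a c : ℝ, IntervalIntegrable g MeasureTheory.volume a c :=
    fun a c => hgc.intervalIntegrable a c
  -- lower bound for b
  have hblow : ∀ x : ℝ, x ∈ Set.Icc (-1 : ℝ) 1 → x ^ (2 * m) / (4 * m) ≤ b x := by
    intro x hx
    have ht0 : (0 : ℝ) ≤ x ^ (2 * m) := (even_two_mul m).pow_nonneg x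
    have ht1 : x ^ (2 * m) ≤ 1 := by
      have habs : |x| ≤ 1 := abs_le.mpr ⟨hx.1, hx.2⟩
      calc x ^ (2 * m) = |x ^ (2 * m)| := (abs_of_nonneg ht0).symm
        _ = |x| ^ (2 * m) := abs_pow x (2 * m)
        _ ≤ 1 := pow_le_one₀ (abs_nonneg x) habs
    have := aux_rpow_le m hm (x ^ (2 * m)) ht0 ht1
    rw [hb x]
    linarith
  by_cases hδ : R * ν ≤ 1
  · -- main case
    have hδpos : 0 < R * ν := by positivity
    set K := ((8 : ℝ) * m) ^ ((1 : ℝ) / 2) with hKdef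
    have hKpos : 0 ≤ K := Real.rpow_nonneg (by positivity) _
    have hK8 : K ≤ 8 * m := by
      calc K ≤ ((8 : ℝ) * m) ^ (1 : ℝ) :=
            Real.rpow_le_rpow_of_exponent_le (by linarith) (by norm_num)
        _ = 8 * m := Real.rpow_one _
    have htail_pt : ∀ x ∈ Set.Icc (R * ν) 1, g x ≤ K * x ^ (-(m : ℝ)) := by
      intro x hx
      have hx0 : 0 < x := lt_of_lt_of_le hδpos hx.1
      have hx2m : R ^ (2 * m) * μ ≤ x ^ (2 * m) := by
        calc R ^ (2 * m) * μ = (R * ν) ^ (2 * m) := by rw [mul_pow, hν2m]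
          _ ≤ x ^ (2 * m) := pow_le_pow_left₀ hδpos.le hx.1 _
      have hRge : 8 * (m : ℝ) * C ≤ R ^ (2 * m) := by
        have h1 : R ≤ R ^ (2 * m) := le_self_pow₀ hR1 (by omega)
        rw [hRdef] at h1 ⊢
        linarith
      have hCμ : C * μ ≤ x ^ (2 * m) / (8 * m) := by
        have h2 : 8 * (m : ℝ) * C * μ ≤ x ^ (2 * m) :=
          le_trans (mul_le_mul_of_nonneg_right hRge hμpos.le) hx2m
        rw [le_div_iff₀ (by positivity : (0 : ℝ) < 8 * m)]
        nlinarith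
      have hεlow : -(C * μ) ≤ ε := by linarith [hε]
      have hbx : x ^ (2 * m) / (8 * m) ≤ b x + ε := by
        have h1 := hblow x ⟨by linarith [hx.1], hx.2⟩
        have hdd : x ^ (2 * m) / (4 * m) = 2 * (x ^ (2 * m) / (8 * m)) := by
          field_simp
          ring
        linarith
      have hbase_ge : x ^ (2 * m) / (8 * m) ≤ μ + |b x + ε| := by
        have habs : b x + ε ≤ |b x + ε| := le_abs_self _
        linarith [hμpos.le]
      have hxp : (0 : ℝ) < x ^ (2 * m) / (8 * m) :=
        div_pos (pow_pos hx0 _) (by positivity)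
      have h1 : g x ≤ (x ^ (2 * m) / (8 * m)) ^ (-(1 : ℝ) / 2) :=
        Real.rpow_le_rpow_of_nonpos hxp hbase_ge (by norm_num)
      have h2 : (x ^ (2 * m) / (8 * m) : ℝ) ^ (-(1 : ℝ) / 2) = K * x ^ (-(m : ℝ)) := by
        rw [Real.div_rpow (pow_pos hx0 _).le (by positivity)]
        rw [← Real.rpow_natCast x (2 * m), ← Real.rpow_mul hx0.le]
        rw [show ((2 * m : ℕ) : ℝ) * (-(1 : ℝ) / 2) = -(m : ℝ) by push_cast; ring]
        rw [show (-(1 : ℝ) / 2) = -((1 : ℝ) / 2) by ring]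
        rw [Real.rpow_neg (by positivity : (0 : ℝ) ≤ 8 * (m : ℝ)) ((1 : ℝ) / 2),
          div_eq_mul_inv, inv_inv, mul_comm]
      rw [h2] at h1
      exact h1
    have hxint : IntervalIntegrable (fun x => K * x ^ (-(m : ℝ)))
        MeasureTheory.volume (R * ν) 1 := by
      apply ContinuousOn.intervalIntegrable
      apply ContinuousOn.mul continuousOn_const
      apply ContinuousOn.rpow_const continuousOn_id
      intro x hx
      rw [Set.uIcc_of_le hδ] at hx
      exact Or.inl (lt_of_lt_of_le hδpos hx.1).ne'
    have htail : ∫ x in (R * ν)..1, g x ≤ 8 * m * L := by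
      have h1 : ∫ x in (R * ν)..1, g x ≤ ∫ x in (R * ν)..1, K * x ^ (-(m : ℝ)) :=
        intervalIntegral.integral_mono_on hδ (hgint _ _) hxint htail_pt
      have h2 : ∫ x in (R * ν)..1, K * x ^ (-(m : ℝ))
          = K * ((1 - (R * ν) ^ (-(m : ℝ) + 1)) / (-(m : ℝ) + 1)) := by
        have hmne : -(m : ℝ) ≠ -1 := by
          intro h
          have h' : (m : ℝ) = 1 := by linarith
          linarith
        rw [intervalIntegral.integral_const_mul, integral_rpow
          (Or.inr ⟨hmne, Set.notMem_uIcc_of_lt hδpos one_pos⟩)]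
        rw [Real.one_rpow]
      have hD1 : 1 ≤ (R * ν) ^ (-(m : ℝ) + 1) :=
        Real.one_le_rpow_of_pos_of_le_one_of_nonpos hδpos hδ (by linarith)
      have hDL : (R * ν) ^ (-(m : ℝ) + 1) ≤ L := by
        rw [Real.mul_rpow hRpos.le hνpos.le]
        have hRle : R ^ (-(m : ℝ) + 1) ≤ 1 :=
          Real.rpow_le_one_of_one_le_of_nonpos hR1 (by linarith)
        have hνnn : 0 ≤ ν ^ (-(m : ℝ) + 1) := Real.rpow_nonneg hνpos.le _
        calc R ^ (-(m : ℝ) + 1) * ν ^ (-(m : ℝ) + 1)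
            ≤ 1 * ν ^ (-(m : ℝ) + 1) := mul_le_mul_of_nonneg_right hRle hνnn
          _ = ν ^ ((1 : ℝ) - m) := by rw [one_mul]; congr 1; ring
          _ = L := hB
      have hV : (1 - (R * ν) ^ (-(m : ℝ) + 1)) / (-(m : ℝ) + 1) ≤ L := by
        rw [div_le_iff_of_neg (by linarith : -(m : ℝ) + 1 < 0)]
        nlinarith
      calc ∫ x in (R * ν)..1, g x ≤ K * ((1 - (R * ν) ^ (-(m : ℝ) + 1)) / (-(m : ℝ) + 1)) := by
            rw [← h2]; exact h1
        _ ≤ K * L := mul_le_mul_of_nonneg_left hV hKpos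
        _ ≤ 8 * m * L := mul_le_mul_of_nonneg_right hK8 hLpos.le
    have hsym : ∫ x in (-1 : ℝ)..(-(R * ν)), g x = ∫ x in (R * ν)..1, g x := by
      have hneg : ∀ x : ℝ, g (-x) = g x := by
        intro x
        simp only [hgdef]
        rw [hb, hb, Even.neg_pow (even_two_mul m)]
      have h := intervalIntegral.integral_comp_neg (a := R * ν) (b := 1) (f := g)
      simp only [hneg] at h
      exact h.symm
    have hmid : ∫ x in (-(R * ν))..(R * ν), g x ≤ 2 * R * L := by
      have h1 : ∫ x in (-(R * ν))..(R * ν), g x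
          ≤ ∫ x in (-(R * ν))..(R * ν), μ ^ (-(1 : ℝ) / 2) :=
        intervalIntegral.integral_mono_on (by linarith) (hgint _ _)
          intervalIntegrable_const (fun x _ => hgle x)
      rw [intervalIntegral.integral_const, smul_eq_mul] at h1
      have h2 : (R * ν - -(R * ν)) * μ ^ (-(1 : ℝ) / 2)
          = 2 * R * (μ ^ (-(1 : ℝ) / 2) * ν) := by ring
      rw [h2, hA] at h1
      exact h1
    have hsplit1 : ∫ x in (-1 : ℝ)..(R * ν), g x
        = (∫ x in (-1 : ℝ)..(-(R * ν)), g x) + ∫ x in (-(R * ν))..(R * ν), g x :=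
      (intervalIntegral.integral_add_adjacent_intervals (hgint _ _) (hgint _ _)).symm
    have hsplit2 : ∫ x in (-1 : ℝ)..1, g x
        = (∫ x in (-1 : ℝ)..(R * ν), g x) + ∫ x in (R * ν)..1, g x :=
      (intervalIntegral.integral_add_adjacent_intervals (hgint _ _) (hgint _ _)).symm
    calc ∫ x in (-1 : ℝ)..1, g x
        = (∫ x in (-1 : ℝ)..(-(R * ν)), g x) + (∫ x in (-(R * ν))..(R * ν), g x)
          + ∫ x in (R * ν)..1, g x := by rw [hsplit2, hsplit1]
      _ ≤ (8 * m * L) + (2 * R * L) + (8 * m * L) := by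
          have ht' : ∫ x in (-1 : ℝ)..(-(R * ν)), g x ≤ 8 * m * L := by
            rw [hsym]; exact htail
          exact add_le_add (add_le_add ht' hmid) htail
      _ = (2 * R + 16 * m) * L := by ring
  · -- degenerate case : R * ν > 1
    push_neg at hδ
    have h1 : ∫ x in (-1 : ℝ)..1, g x ≤ ∫ x in (-1 : ℝ)..1, μ ^ (-(1 : ℝ) / 2) :=
      intervalIntegral.integral_mono_on (by norm_num) (hgint _ _)
        intervalIntegrable_const (fun x _ => hgle x)
    rw [intervalIntegral.integral_const, smul_eq_mul] at h1
    have h2 : μ ^ (-(1 : ℝ) / 2) ≤ R * L := by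
      calc μ ^ (-(1 : ℝ) / 2) = μ ^ (-(1 : ℝ) / 2) * 1 := (mul_one _).symm
        _ ≤ μ ^ (-(1 : ℝ) / 2) * (R * ν) := mul_le_mul_of_nonneg_left hδ.le hμs
        _ = R * (μ ^ (-(1 : ℝ) / 2) * ν) := by ring
        _ = R * L := by rw [hA]
    calc ∫ x in (-1 : ℝ)..1, g x ≤ (1 - (-1)) * μ ^ (-(1 : ℝ) / 2) := h1
      _ ≤ 2 * (R * L) := by nlinarith
      _ ≤ (2 * R + 16 * m) * L := by nlinarith
end

section
/- Let m ≥ 2, λ ≥ 1, δ > 0, C > 0, and ε ≥ -Cλ^{-2m/(m+1)}. With b(x) = 1 - (x^{2m}+1)^{-1/m}, ∫_{-1}^{1} |x|^{m-1+δ} · (λ^{-2m/(m+1)} + |b(x)+ε|)^{-1/2} dx ≤ C' for a constant C' depending only on m, δ, C (uniform in λ and ε). -/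
lemma bLower_aux (m : ℕ) (hm : 1 ≤ m) (t : ℝ) (ht0 : 0 ≤ t) (ht1 : t ≤ 1) :
    (t + 1) ^ (-(1 : ℝ) / m) ≤ 1 - t / (2 * m + 1) := by
  have hm0 : (m : ℝ) ≠ 0 := by positivity
  have hm1 : (1 : ℝ) ≤ m := by exact_mod_cast hm
  have h2m : (0 : ℝ) < 2 * m + 1 := by linarith
  have ht1' : 0 < t + 1 := by linarith
  have hA : 0 ≤ (t + 1) ^ (-(1 : ℝ) / m) := Real.rpow_nonneg (by linarith) _
  have hB : (0 : ℝ) ≤ 1 - t / (2 * m + 1) := by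
    rw [sub_nonneg, div_le_one h2m]; linarith
  rw [← pow_le_pow_iff_left₀ hA hB (by omega : m ≠ 0)]
  have hpow : ((t + 1) ^ (-(1 : ℝ) / m)) ^ m = (t + 1)⁻¹ := by
    rw [← Real.rpow_natCast ((t + 1) ^ (-(1 : ℝ) / m)) m, ← Real.rpow_mul ht1'.le,
      div_mul_cancel₀ _ hm0, Real.rpow_neg_one]
  rw [hpow]
  have hber : 1 - (m : ℝ) * (t / (2 * m + 1)) ≤ (1 - t / (2 * m + 1)) ^ m := by
    have h := one_add_mul_le_pow (a := -(t / (2 * m + 1)))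
      (by nlinarith [div_nonneg ht0 h2m.le, (div_le_one h2m).mpr (by linarith : t ≤ 2 * m + 1)]) m
    have : 1 + (m : ℝ) * (-(t / (2 * m + 1))) = 1 - (m : ℝ) * (t / (2 * m + 1)) := by ring
    rw [this] at h
    simpa [sub_eq_add_neg] using h
  have hmain : (t + 1)⁻¹ ≤ 1 - (m : ℝ) * (t / (2 * m + 1)) := by
    have expand : 1 - (m : ℝ) * (t / (2 * m + 1)) = (2 * m + 1 - m * t) / (2 * m + 1) := by
      field_simp
    rw [expand, inv_eq_one_div, div_le_div_iff₀ ht1' h2m]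
    have h5 : (m : ℝ) * t ≤ (m : ℝ) := by nlinarith
    nlinarith [mul_nonneg ht0 (by linarith : (0 : ℝ) ≤ (m : ℝ) + 1 - m * t)]
  exact hmain.trans hber

set_option maxHeartbeats 1000000 in
/-- For `m ≥ 2`, `δ > 0`, `C > 0`, `λ ≥ 1`, `ε ≥ -C·λ^(-2m/(m+1))`, with
`b(x) = 1 - (x^(2m)+1)^(-1/m)`:
`∫_{-1}^{1} |x|^(m-1+δ)·(λ^(-2m/(m+1)) + |b(x)+ε|)^(-1/2) dx ≤ C'`
for some `C' > 0` depending only on `m`, `δ`, `C` (uniform in `λ` and `ε`). -/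
theorem stmt_8 (m : ℕ) (hm : 2 ≤ m) (δ : ℝ) (hδ : 0 < δ) (C : ℝ) (hC : 0 < C)
    (b : ℝ → ℝ) (hb : ∀ x, b x = 1 - (x ^ (2 * m) + 1) ^ (-(1 : ℝ) / m)) :
    ∃ C' > 0, ∀ lam : ℝ, 1 ≤ lam → ∀ ε : ℝ,
      -C * lam ^ (-(2 * (m : ℝ)) / (m + 1)) ≤ ε →
      ∫ x in (-1 : ℝ)..1,
          |x| ^ ((m : ℝ) - 1 + δ) *
            (lam ^ (-(2 * (m : ℝ)) / (m + 1)) + |b x + ε|) ^ (-(1 : ℝ) / 2)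
        ≤ C' := by
  have hm1 : (1 : ℝ) ≤ m := by exact_mod_cast hm.trans' (by norm_num)
  have h2m : (0 : ℝ) < 2 * m + 1 := by linarith
  set K : ℝ := Real.sqrt (2 * (C + 1) * (2 * m + 1)) with hK
  have hKnn : 0 ≤ K := Real.sqrt_nonneg _
  have hK2 : K ^ 2 = 2 * (C + 1) * (2 * m + 1) := Real.sq_sqrt (by positivity)
  refine ⟨2 * K / δ + 1, by positivity, ?_⟩
  intro lam hlam ε hε
  set μ : ℝ := lam ^ (-(2 * (m : ℝ)) / (m + 1)) with hμ
  have hμpos : 0 < μ := Real.rpow_pos_of_pos (by linarith) _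
  -- pointwise bound
  have key : ∀ x ∈ Set.Icc (-1 : ℝ) 1,
      |x| ^ ((m : ℝ) - 1 + δ) * (μ + |b x + ε|) ^ (-(1 : ℝ) / 2) ≤ K * |x| ^ (δ - 1) := by
    intro x hx
    rcases eq_or_ne x 0 with rfl | hx0
    · have : |(0 : ℝ)| ^ ((m : ℝ) - 1 + δ) = 0 := by
        rw [abs_zero, Real.zero_rpow (ne_of_gt (by linarith : (0:ℝ) < (m : ℝ) - 1 + δ))]
      rw [this, zero_mul]
      exact mul_nonneg hKnn (Real.rpow_nonneg (abs_nonneg _) _)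
    · have hxpos : 0 < |x| := abs_pos.mpr hx0
      have hx1 : |x| ≤ 1 := abs_le.mpr ⟨hx.1, hx.2⟩
      have ht0 : (0 : ℝ) ≤ x ^ (2 * m) := by rw [pow_mul]; positivity
      have ht1 : x ^ (2 * m) ≤ 1 := by
        calc x ^ (2 * m) = |x| ^ (2 * m) := (abs_pow x (2 * m)) ▸ (abs_of_nonneg ht0).symm
          _ ≤ 1 := pow_le_one₀ hxpos.le hx1
      have hbl : x ^ (2 * m) / (2 * m + 1) ≤ b x := by
        rw [hb x]
        have := bLower_aux m (by omega) (x ^ (2 * m)) ht0 ht1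
        linarith
      have hg : 0 < μ + |b x + ε| := by positivity
      -- squared key inequality
      have hkey2 : x ^ (2 * m) ≤ K ^ 2 * (μ + |b x + ε|) := by
        have hbl' : x ^ (2 * m) ≤ b x * (2 * (m : ℝ) + 1) := (div_le_iff₀ h2m).mp hbl
        rw [hK2]
        by_cases hcase : x ^ (2 * m) ≤ 2 * C * (2 * (m : ℝ) + 1) * μ
        · nlinarith [mul_pos h2m hμpos,
            mul_nonneg (mul_nonneg (by linarith : (0 : ℝ) ≤ 2 * (C + 1)) h2m.le)
              (abs_nonneg (b x + ε))]
        · push_neg at hcase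
          have h1 : x ^ (2 * m) ≤ (b x + ε) * (2 * (2 * (m : ℝ) + 1)) := by
            have hε' : -C * μ ≤ ε := hε
            nlinarith
          have h2 : b x + ε ≤ |b x + ε| := le_abs_self _
          have h3' : x ^ (2 * m) ≤ (μ + |b x + ε|) * (2 * (2 * (m : ℝ) + 1)) := by
            nlinarith [hμpos]
          nlinarith [mul_nonneg (mul_nonneg (by linarith : (0 : ℝ) ≤ 2 * C) h2m.le)
            (add_nonneg hμpos.le (abs_nonneg (b x + ε)))]
      -- take square roots
      have h4 : |x| ^ m ≤ K * Real.sqrt (μ + |b x + ε|) := by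
        have hs := Real.sqrt_le_sqrt hkey2
        have e1 : Real.sqrt (x ^ (2 * m)) = |x| ^ m := by
          rw [show 2 * m = m * 2 by ring, pow_mul, Real.sqrt_sq_eq_abs, abs_pow]
        have e2 : Real.sqrt (K ^ 2 * (μ + |b x + ε|))
            = K * Real.sqrt (μ + |b x + ε|) := by
          rw [Real.sqrt_mul (by positivity), Real.sqrt_sq hKnn]
        rwa [e1, e2] at hs
      have h5 : |x| ^ ((m : ℝ)) * (μ + |b x + ε|) ^ (-(1 : ℝ) / 2) ≤ K := by
        have hrs : (μ + |b x + ε|) ^ (-(1 : ℝ) / 2) = (Real.sqrt (μ + |b x + ε|))⁻¹ := by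
          rw [show (-(1 : ℝ) / 2) = -(1 / 2) by ring, Real.rpow_neg hg.le,
            Real.sqrt_eq_rpow]
        rw [hrs, Real.rpow_natCast]
        have hsq : 0 < Real.sqrt (μ + |b x + ε|) := Real.sqrt_pos.mpr hg
        rw [mul_inv_le_iff₀ hsq]
        linarith [h4]
      have e3 : |x| ^ ((m : ℝ) - 1 + δ) = |x| ^ (δ - 1) * |x| ^ ((m : ℝ)) := by
        rw [← Real.rpow_add hxpos]; ring_nf
      calc |x| ^ ((m : ℝ) - 1 + δ) * (μ + |b x + ε|) ^ (-(1 : ℝ) / 2)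
          = |x| ^ (δ - 1) * (|x| ^ ((m : ℝ)) * (μ + |b x + ε|) ^ (-(1 : ℝ) / 2)) := by
            rw [e3]; ring
        _ ≤ |x| ^ (δ - 1) * K :=
            mul_le_mul_of_nonneg_left h5 (Real.rpow_nonneg (abs_nonneg x) _)
        _ = K * |x| ^ (δ - 1) := by ring
  -- integrability
  have hcb : Continuous b := by
    have : Continuous fun x : ℝ => 1 - (x ^ (2 * m) + 1) ^ (-(1 : ℝ) / m) := by
      refine continuous_const.sub (Continuous.rpow_const (by continuity) fun x => Or.inl ?_)
      have : (0 : ℝ) < x ^ (2 * m) + 1 := by rw [pow_mul]; positivity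
      exact ne_of_gt this
    exact (funext hb : b = _) ▸ this
  have hc1 : Continuous fun x : ℝ => |x| ^ ((m : ℝ) - 1 + δ) :=
    Continuous.rpow_const continuous_abs fun x => Or.inr (by linarith)
  have hc2 : Continuous fun x : ℝ => (μ + |b x + ε|) ^ (-(1 : ℝ) / 2) := by
    refine Continuous.rpow_const
      (continuous_const.add ((hcb.add continuous_const).abs)) fun x => Or.inl ?_
    have : 0 < μ + |b x + ε| := by positivity
    exact ne_of_gt this
  have hcf : Continuous fun x : ℝ =>
      |x| ^ ((m : ℝ) - 1 + δ) * (μ + |b x + ε|) ^ (-(1 : ℝ) / 2) := hc1.mul hc2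
  have hint_f : IntervalIntegrable
      (fun x : ℝ => |x| ^ ((m : ℝ) - 1 + δ) * (μ + |b x + ε|) ^ (-(1 : ℝ) / 2))
      MeasureTheory.volume (-1) 1 := hcf.intervalIntegrable _ _
  have habs01 : IntervalIntegrable (fun x : ℝ => |x| ^ (δ - 1))
      MeasureTheory.volume 0 1 := by
    refine (intervalIntegral.intervalIntegrable_rpow' (r := δ - 1) (by linarith)).congr ?_
    rw [Set.uIoc_of_le (by norm_num : (0 : ℝ) ≤ 1)]
    intro x hx
    show x ^ (δ - 1) = |x| ^ (δ - 1)
    rw [abs_of_pos hx.1]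
  have habs10 : IntervalIntegrable (fun x : ℝ => |x| ^ (δ - 1))
      MeasureTheory.volume (-1) 0 := by
    have := (IntervalIntegrable.iff_comp_neg (f := fun x : ℝ => |x| ^ (δ - 1)) (a := 0) (b := 1)).mp habs01
    simp only [abs_neg, neg_zero] at this
    exact this.symm
  have habs : IntervalIntegrable (fun x : ℝ => |x| ^ (δ - 1))
      MeasureTheory.volume (-1) 1 := habs10.trans habs01
  have hint_g : IntervalIntegrable (fun x : ℝ => K * |x| ^ (δ - 1))
      MeasureTheory.volume (-1) 1 := habs.const_mul K
  -- compute integral of majorant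
  have hI01 : (∫ x in (0 : ℝ)..1, |x| ^ (δ - 1)) = 1 / δ := by
    rw [intervalIntegral.integral_congr (g := fun x : ℝ => x ^ (δ - 1)) ?_]
    · rw [integral_rpow (Or.inl (by linarith))]
      rw [sub_add_cancel, Real.one_rpow, Real.zero_rpow (ne_of_gt hδ)]
      norm_num
    · intro x hx
      rw [Set.uIcc_of_le (by norm_num : (0 : ℝ) ≤ 1)] at hx
      simp only [abs_of_nonneg hx.1]
  have hI10 : (∫ x in (-1 : ℝ)..0, |x| ^ (δ - 1)) = 1 / δ := by
    have := intervalIntegral.integral_comp_neg (fun x : ℝ => |x| ^ (δ - 1)) (a := 0) (b := 1)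
    simp only [abs_neg, neg_zero, neg_neg] at this
    rw [← this]
    exact hI01
  have hIg : (∫ x in (-1 : ℝ)..1, K * |x| ^ (δ - 1)) = 2 * K / δ := by
    rw [intervalIntegral.integral_const_mul,
      ← intervalIntegral.integral_add_adjacent_intervals habs10 habs01, hI10, hI01]
    ring
  calc (∫ x in (-1 : ℝ)..1,
        |x| ^ ((m : ℝ) - 1 + δ) * (μ + |b x + ε|) ^ (-(1 : ℝ) / 2))
      ≤ ∫ x in (-1 : ℝ)..1, K * |x| ^ (δ - 1) :=
        intervalIntegral.integral_mono_on (by norm_num) hint_f hint_g key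
    _ = 2 * K / δ := hIg
    _ ≤ 2 * K / δ + 1 := by linarith
end

section
/- Let m ≥ 2 and b(x) = 1 - (x^{2m}+1)^{-1/m}. Then for 0 < |x| ≤ 1, (b'(x))^2 ≤ C·b(x)^{(2m-1)/m} for a constant C depending only on m. -/
private lemma aux_concave (m : ℕ) (hm : 2 ≤ m) {t : ℝ} (ht0 : 0 ≤ t) (ht1 : t ≤ 1) :
    1 + t * ((2:ℝ) ^ ((1:ℝ)/m) - 1) ≤ (1 + t) ^ ((1:ℝ)/m) := by
  have hmpos : (0:ℝ) < m := by positivity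
  have h1 : (0:ℝ) < 1/m := by positivity
  have h2 : (1:ℝ)/m < 1 := by
    rw [div_lt_one hmpos]
    exact_mod_cast lt_of_lt_of_le one_lt_two (by exact_mod_cast hm)
  have hc := (Real.strictConcaveOn_rpow h1 h2).concaveOn
  have key : (1 - t) * (1:ℝ) ^ ((1:ℝ)/(m:ℝ)) + t * (2:ℝ) ^ ((1:ℝ)/(m:ℝ))
      ≤ ((1 - t) * 1 + t * 2) ^ ((1:ℝ)/(m:ℝ)) :=
    hc.2 (Set.mem_Ici.2 (by norm_num : (0:ℝ) ≤ 1))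
      (Set.mem_Ici.2 (by norm_num : (0:ℝ) ≤ 2))
      (show (0:ℝ) ≤ 1 - t by linarith) ht0 (show (1 - t) + t = 1 by ring)
  rw [Real.one_rpow] at key
  have h12 : (1 - t) * 1 + t * 2 = 1 + t := by ring
  rw [h12] at key
  nlinarith [key]

private lemma aux_blower (m : ℕ) (hm : 2 ≤ m) {t : ℝ} (ht0 : 0 ≤ t) (ht1 : t ≤ 1) :
    (((2:ℝ) ^ ((1:ℝ)/m) - 1)/2) * t ≤ 1 - (1 + t) ^ (-(1:ℝ)/m) := by
  have hmpos : (0:ℝ) < m := by positivity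
  have hgt : (1:ℝ) < (2:ℝ) ^ ((1:ℝ)/m) :=
    Real.one_lt_rpow_iff (by norm_num) |>.2 (Or.inl ⟨one_lt_two, by positivity⟩)
  set c : ℝ := (2:ℝ) ^ ((1:ℝ)/m) - 1 with hcdef
  have hc0 : 0 < c := by rw [hcdef]; linarith
  have hc1 : c ≤ 1 := by
    have h1m : (1:ℝ)/m ≤ 1 := by
      rw [div_le_one hmpos]; exact_mod_cast le_trans (by norm_num) hm
    have h := Real.rpow_le_rpow_of_exponent_le (by norm_num : (1:ℝ) ≤ 2) h1m
    rw [Real.rpow_one] at h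
    rw [hcdef]; linarith
  have hconc := aux_concave m hm ht0 ht1
  rw [← hcdef] at hconc
  have hspos : (0:ℝ) < 1 + t * c := by nlinarith
  have h1t : (0:ℝ) < 1 + t := by linarith
  have hrw : (1 + t) ^ (-(1:ℝ)/m) = ((1 + t) ^ ((1:ℝ)/m))⁻¹ := by
    rw [neg_div, Real.rpow_neg (le_of_lt h1t)]
  rw [hrw]
  have hinv : ((1 + t) ^ ((1:ℝ)/m))⁻¹ ≤ (1 + t * c)⁻¹ :=
    inv_anti₀ hspos hconc
  have hfrac : 1 - (1 + t * c)⁻¹ = (t * c)/(1 + t * c) := by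
    field_simp; ring
  have hle2 : 1 + t * c ≤ 2 := by nlinarith
  have hdiv : (t * c)/2 ≤ (t * c)/(1 + t * c) :=
    div_le_div_of_nonneg_left (by positivity) hspos hle2
  linarith

/-- For `m ≥ 2` and `b(x) = 1 - (x^(2m)+1)^(-1/m)`: for `0 < |x| ≤ 1`,
`(b'(x))^2 ≤ C·b(x)^((2m-1)/m)` for some `C > 0` depending only on `m`. -/
theorem stmt_10 (m : ℕ) (hm : 2 ≤ m)
    (b : ℝ → ℝ) (hb : ∀ x, b x = 1 - (x ^ (2 * m) + 1) ^ (-(1 : ℝ) / m)) :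
    ∃ C > 0, ∀ x : ℝ, 0 < |x| → |x| ≤ 1 →
      (deriv b x) ^ 2 ≤ C * (b x) ^ ((2 * (m : ℝ) - 1) / m) := by
  have hmpos : (0:ℝ) < m := by positivity
  have hm0 : (m:ℝ) ≠ 0 := ne_of_gt hmpos
  have hgt : (1:ℝ) < (2:ℝ) ^ ((1:ℝ)/m) :=
    Real.one_lt_rpow_iff (by norm_num) |>.2 (Or.inl ⟨one_lt_two, by positivity⟩)
  set c : ℝ := (2:ℝ) ^ ((1:ℝ)/m) - 1 with hcdef
  have hc0 : 0 < c := by rw [hcdef]; linarith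
  set e : ℝ := (2 * (m : ℝ) - 1) / m with hedef
  have he0 : 0 < e := by
    apply div_pos _ hmpos
    have : (2:ℝ) ≤ (m:ℝ) := by exact_mod_cast hm
    linarith
  have hce : (0:ℝ) < (c/2) ^ e := Real.rpow_pos_of_pos (half_pos hc0) e
  refine ⟨4 / (c/2) ^ e, by positivity, fun x hx0 hx1 => ?_⟩
  set p : ℝ := -(1:ℝ)/m with hpdef
  set n : ℕ := 2 * m with hndef
  have hn1 : 1 ≤ n := by omega
  have hxev : x ^ n = |x| ^ n := by
    rw [hndef, pow_mul, pow_mul, sq_abs]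
  have hxn0 : 0 ≤ x ^ n := by rw [hxev]; positivity
  have hxn1 : x ^ n ≤ 1 := by
    rw [hxev]; exact pow_le_one₀ (abs_nonneg x) hx1
  have hbase : (0:ℝ) < x ^ n + 1 := by linarith
  -- derivative
  have hfd : HasDerivAt (fun y : ℝ => y ^ n + 1) ((n:ℝ) * x ^ (n - 1)) x :=
    (hasDerivAt_pow n x).add_const 1
  have hg : HasDerivAt (fun y : ℝ => (y ^ n + 1) ^ p)
      ((n:ℝ) * x ^ (n - 1) * p * (x ^ n + 1) ^ (p - 1)) x :=
    hfd.rpow_const (Or.inl (ne_of_gt hbase))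
  have hbfun : b = fun y : ℝ => 1 - (y ^ n + 1) ^ p := funext hb
  have hbd : HasDerivAt b (-((n:ℝ) * x ^ (n - 1) * p * (x ^ n + 1) ^ (p - 1))) x := by
    rw [hbfun]
    have h := (hasDerivAt_const x (1:ℝ)).sub hg
    simp only [zero_sub] at h
    exact h
  have hderiv : deriv b x = -((n:ℝ) * x ^ (n - 1) * p * (x ^ n + 1) ^ (p - 1)) :=
    hbd.deriv
  set A : ℝ := (x ^ n + 1) ^ (p - 1) with hAdef
  have hA0 : 0 < A := Real.rpow_pos_of_pos hbase _
  have hA1 : A ≤ 1 := by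
    apply Real.rpow_le_one_of_one_le_of_nonpos (by linarith)
    have h1 : (0:ℝ) < 1/m := by positivity
    rw [hpdef, neg_div]; linarith
  have hnp : (n:ℝ) * p = -2 := by
    rw [hndef, hpdef]; push_cast; field_simp
  have hsq : (deriv b x) ^ 2 = 4 * ((x ^ (n-1)) ^ 2 * A ^ 2) := by
    rw [hderiv]
    have h : (-((n:ℝ) * x ^ (n - 1) * p * A)) ^ 2
        = ((n:ℝ) * p) ^ 2 * ((x ^ (n-1)) ^ 2 * A ^ 2) := by ring
    rw [h, hnp]; norm_num
  have hxx : (x ^ (n-1)) ^ 2 = |x| ^ ((n-1) * 2) := by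
    rw [pow_mul, ← abs_pow, sq_abs]
  have hLHS : (deriv b x) ^ 2 ≤ 4 * |x| ^ ((n-1) * 2) := by
    rw [hsq, hxx]
    have hA2 : A ^ 2 ≤ 1 := by nlinarith
    nlinarith [pow_nonneg (abs_nonneg x) ((n-1)*2)]
  -- lower bound on b
  have hblow : (c/2) * x ^ n ≤ b x := by
    have h := aux_blower m hm hxn0 hxn1
    rw [← hcdef, add_comm (1:ℝ) (x ^ n), ← hpdef] at h
    rw [hb x]
    exact h
  have hbx0 : 0 ≤ (c/2) * x ^ n := by positivity
  have hrpow : ((c/2) * x ^ n) ^ e ≤ (b x) ^ e :=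
    Real.rpow_le_rpow hbx0 hblow (le_of_lt he0)
  have hmulr : ((c/2) * x ^ n) ^ e = (c/2) ^ e * (x ^ n) ^ e :=
    Real.mul_rpow (by positivity) hxn0
  have hxne : (x ^ n) ^ e = |x| ^ ((n-1) * 2) := by
    rw [hxev, ← Real.rpow_natCast |x| n, ← Real.rpow_mul (abs_nonneg x),
      ← Real.rpow_natCast |x| ((n-1)*2)]
    congr 1
    have hcast : ((n:ℝ)) = 2 * m := by rw [hndef]; push_cast; ring
    have hc2 : (((n-1) * 2 : ℕ) : ℝ) = 2 * (2 * (m:ℝ) - 1) := by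
      have h4 : (n-1)*2 = 4*m-2 := by omega
      rw [h4, Nat.cast_sub (by omega : 2 ≤ 4*m)]
      push_cast; ring
    rw [hcast, hc2, hedef]
    field_simp
  have hfinal : 4 * |x| ^ ((n-1) * 2) ≤ 4 / (c/2) ^ e * (b x) ^ e := by
    rw [div_mul_eq_mul_div, le_div_iff₀ hce]
    calc 4 * |x| ^ ((n-1)*2) * (c/2) ^ e
        = 4 * ((c/2) ^ e * (x ^ n) ^ e) := by rw [hxne]; ring
      _ = 4 * ((c/2) * x ^ n) ^ e := by rw [hmulr]
      _ ≤ 4 * (b x) ^ e := by linarith [hrpow]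
  linarith
end

section
/- Case II energy estimate: Suppose V ∈ C¹([-1,1]) satisfies V(x) ≥ c·τ² > 0 and |V'(x)| ≤ K·V(x) on [-1,1], and φ ∈ C² is supported in [-1,1] with φ'' + Vφ = g. Then sup_x [φ'(x)² + V(x)φ(x)²] ≤ C(c,K)·‖g‖²_{L²([-1,1])}, and in particular τ‖φ‖_{L²} + ‖φ'‖_{L²} ≤ C'·‖g‖_{L²}. -/
open Set intervalIntegral

private lemma zero_at_left {f : ℝ → ℝ} (hf : Continuous f) (h : ∀ x < (-1:ℝ), f x = 0) :
    f (-1) = 0 := by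
  have h1 : Filter.Tendsto f (nhdsWithin (-1) (Set.Iio (-1))) (nhds (f (-1))) :=
    (hf.tendsto _).mono_left nhdsWithin_le_nhds
  have h2 : Filter.Tendsto f (nhdsWithin (-1) (Set.Iio (-1))) (nhds 0) := by
    refine Filter.Tendsto.congr' ?_ tendsto_const_nhds
    filter_upwards [self_mem_nhdsWithin] with x hx
    exact (h x hx).symm
  exact tendsto_nhds_unique h1 h2

set_option maxHeartbeats 1000000 in
/-- Case II energy estimate: for all `c, K > 0` there are `C, C' > 0` such that for
all `τ ≥ 1`, if `V` is `C¹` with `V ≥ c·τ²` and `|V'| ≤ K·V` on `[-1,1]`, and `φ`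
is `C²`, supported in `[-1,1]`, with `φ'' + Vφ = g`, then
`sup_x [φ'(x)² + V(x)φ(x)²] ≤ C·‖g‖²` and `τ‖φ‖ + ‖φ'‖ ≤ C'·‖g‖`. -/
theorem stmt_14 (c K : ℝ) (hc : 0 < c) (hK : 0 < K) :
    ∃ C > 0, ∃ C' > 0, ∀ τ : ℝ, 1 ≤ τ → ∀ (V φ g : ℝ → ℝ),
      ContDiff ℝ 1 V →
      (∀ x ∈ Set.Icc (-1 : ℝ) 1, c * τ ^ 2 ≤ V x) →
      (∀ x ∈ Set.Icc (-1 : ℝ) 1, |deriv V x| ≤ K * V x) →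
      ContDiff ℝ 2 φ →
      (tsupport φ ⊆ Set.Icc (-1) 1) →
      (∀ x : ℝ, deriv (deriv φ) x + V x * φ x = g x) →
      (∀ x ∈ Set.Icc (-1 : ℝ) 1,
        (deriv φ x) ^ 2 + V x * (φ x) ^ 2 ≤ C * ∫ y in (-1 : ℝ)..1, (g y) ^ 2) ∧
      τ * Real.sqrt (∫ y in (-1 : ℝ)..1, (φ y) ^ 2) +
          Real.sqrt (∫ y in (-1 : ℝ)..1, (deriv φ y) ^ 2)
        ≤ C' * Real.sqrt (∫ y in (-1 : ℝ)..1, (g y) ^ 2) := by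
  set C : ℝ := Real.exp (2 * (K + 1)) with hCdef
  have hC : 0 < C := Real.exp_pos _
  refine ⟨C, hC, Real.sqrt (2 * C / c) + Real.sqrt (2 * C), ?_, ?_⟩
  · have h1 : 0 < 2 * C / c := by positivity
    have h2 : (0:ℝ) < 2 * C := by positivity
    have := Real.sqrt_pos.mpr h1
    have := Real.sqrt_pos.mpr h2
    linarith
  intro τ hτ V φ g hV hVlb hV' hφ hsupp hode
  -- basic regularity
  have hφd : Differentiable ℝ φ := hφ.differentiable (by norm_num)
  have hφc : Continuous φ := hφd.continuous
  have hφ'c1 : ContDiff ℝ 1 (deriv φ) := by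
    have := (contDiff_succ_iff_deriv (n := 1)).mp (by exact_mod_cast hφ)
    exact this.2.2
  have hφ'd : Differentiable ℝ (deriv φ) := hφ'c1.differentiable (by norm_num)
  have hφ''c : Continuous (deriv (deriv φ)) := hφ'c1.continuous_deriv le_rfl
  have hVd : Differentiable ℝ V := hV.differentiable (by norm_num)
  have hVc : Continuous V := hVd.continuous
  have hV'c : Continuous (deriv V) := hV.continuous_deriv le_rfl
  have hgc : Continuous g := by
    have : g = fun x => deriv (deriv φ) x + V x * φ x := funext fun x => (hode x).symm
    rw [this]
    exact hφ''c.add (hVc.mul hφc)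
  -- vanishing at -1
  have hout : ∀ x < (-1:ℝ), φ x = 0 := by
    intro x hx
    have : x ∉ tsupport φ := fun h => absurd (hsupp h).1 (by linarith)
    exact image_eq_zero_of_notMem_tsupport this
  have hout' : ∀ x < (-1:ℝ), deriv φ x = 0 := by
    intro x hx
    have hev : φ =ᶠ[nhds x] (fun _ => (0:ℝ)) := by
      filter_upwards [Iio_mem_nhds hx] with y hy
      exact hout y hy
    rw [Filter.EventuallyEq.deriv_eq hev, deriv_const]
  have hφ0 : φ (-1) = 0 := zero_at_left hφc hout
  have hφ'0 : deriv φ (-1) = 0 := zero_at_left hφ'd.continuous hout'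
  -- Energy
  set E : ℝ → ℝ := fun x => (deriv φ x) ^ 2 + V x * (φ x) ^ 2 with hEdef
  have hE0 : E (-1) = 0 := by simp [hEdef, hφ0, hφ'0]
  have hEderiv : ∀ x : ℝ, HasDerivAt E
      (2 * deriv φ x * (g x - V x * φ x) + (deriv V x * φ x ^ 2 + V x * (2 * φ x * deriv φ x))) x := by
    intro x
    have h1 : HasDerivAt (fun y => (deriv φ y) ^ 2) (2 * deriv φ x * deriv (deriv φ) x) x := by
      have := ((hφ'd x).hasDerivAt).fun_pow 2
      simpa [mul_comm, mul_assoc, mul_left_comm] using this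
    have h2 : HasDerivAt (fun y => V y * (φ y) ^ 2)
        (deriv V x * φ x ^ 2 + V x * (2 * φ x * deriv φ x)) x := by
      have hp : HasDerivAt (fun y => (φ y) ^ 2) (2 * φ x * deriv φ x) x := by
        have := ((hφd x).hasDerivAt).fun_pow 2
        simpa [mul_comm, mul_assoc, mul_left_comm] using this
      exact ((hVd x).hasDerivAt).mul hp
    have hdd : deriv (deriv φ) x = g x - V x * φ x := by
      have := hode x; linarith
    rw [← hdd]
    exact h1.add h2
  set a : ℝ := K + 1 with hadef
  have ha : 0 < a := by positivity
  -- F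
  set F : ℝ → ℝ := fun x => Real.exp (-a * x) * E x - ∫ t in (-1:ℝ)..x, Real.exp (-a * t) * g t ^ 2
    with hFdef
  have hFderiv : ∀ x : ℝ, HasDerivAt F
      (-a * Real.exp (-a * x) * E x
        + Real.exp (-a * x) * (2 * deriv φ x * (g x - V x * φ x)
            + (deriv V x * φ x ^ 2 + V x * (2 * φ x * deriv φ x)))
        - Real.exp (-a * x) * g x ^ 2) x := by
    intro x
    have hexp : HasDerivAt (fun y => Real.exp (-a * y)) (-a * Real.exp (-a * x)) x := by
      have h0 : HasDerivAt (fun y : ℝ => -a * y) (-a) x := by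
        simpa using (hasDerivAt_id x).const_mul (-a)
      simpa [mul_comm] using h0.exp
    have hint : HasDerivAt (fun y => ∫ t in (-1:ℝ)..y, Real.exp (-a * t) * g t ^ 2)
        (Real.exp (-a * x) * g x ^ 2) x :=
      (((Real.continuous_exp.comp (continuous_const.mul continuous_id)).mul
        (hgc.pow 2)).integral_hasStrictDerivAt (-1) x).hasDerivAt
    have := (hexp.fun_mul (hEderiv x)).fun_sub hint
    convert this using 1
  -- F is antitone on Icc
  have hFanti : AntitoneOn F (Icc (-1:ℝ) 1) := by
    apply antitoneOn_of_deriv_nonpos (convex_Icc _ _)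
    · have hFdiff : Differentiable ℝ F := fun x => (hFderiv x).differentiableAt
      exact hFdiff.continuous.continuousOn
    · intro x _; exact (hFderiv x).differentiableAt.differentiableWithinAt
    · intro x hx
      rw [interior_Icc] at hx
      rw [(hFderiv x).deriv]
      have hxI : x ∈ Icc (-1:ℝ) 1 := Ioo_subset_Icc_self hx
      have hVx : 0 < V x := lt_of_lt_of_le (by positivity) (hVlb x hxI)
      have hV'x := hV' x hxI
      have habs : deriv V x ≤ K * V x := (abs_le.mp hV'x).2
      have hexp : (0:ℝ) < Real.exp (-a * x) := Real.exp_pos _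
      have key : 2 * deriv φ x * (g x - V x * φ x)
          + (deriv V x * φ x ^ 2 + V x * (2 * φ x * deriv φ x)) - g x ^ 2 ≤ a * E x := by
        have h1 : 2 * deriv φ x * g x ≤ deriv φ x ^ 2 + g x ^ 2 := by nlinarith [sq_nonneg (deriv φ x - g x)]
        have h2 : deriv V x * φ x ^ 2 ≤ K * V x * φ x ^ 2 := by nlinarith [sq_nonneg (φ x)]
        have h3 : 0 ≤ V x * φ x ^ 2 := by positivity
        simp only [hEdef, hadef]
        nlinarith [sq_nonneg (deriv φ x)]
      nlinarith
  -- E x ≤ C * I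
  set I : ℝ := ∫ y in (-1:ℝ)..1, (g y) ^ 2 with hIdef
  have hg2int : ∀ u v : ℝ, IntervalIntegrable (fun y => g y ^ 2) MeasureTheory.volume u v :=
    fun u v => ((hgc.pow 2).intervalIntegrable u v)
  have hInonneg : 0 ≤ I := by
    rw [hIdef]
    apply intervalIntegral.integral_nonneg (by norm_num)
    intro x _; positivity
  have hmain : ∀ x ∈ Icc (-1:ℝ) 1, E x ≤ C * I := by
    intro x hx
    have hF0 : F x ≤ F (-1) := hFanti (left_mem_Icc.mpr (by norm_num)) hx hx.1
    have hFm1 : F (-1) = 0 := by simp [hFdef, hE0]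
    rw [hFm1] at hF0
    have hexp : (0:ℝ) < Real.exp (-a * x) := Real.exp_pos _
    have hint1 : (∫ t in (-1:ℝ)..x, Real.exp (-a * t) * g t ^ 2)
        ≤ ∫ t in (-1:ℝ)..x, Real.exp a * g t ^ 2 := by
      apply intervalIntegral.integral_mono_on hx.1
      · exact ((Real.continuous_exp.comp (continuous_const.mul continuous_id)).mul
          (hgc.pow 2)).intervalIntegrable _ _
      · exact (continuous_const.mul (hgc.pow 2)).intervalIntegrable _ _
      · intro t ht
        have : Real.exp (-a * t) ≤ Real.exp a := by
          apply Real.exp_le_exp.mpr; nlinarith [ht.1]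
        nlinarith [sq_nonneg (g t), this, Real.exp_pos (-a * t)]
    have hint2 : (∫ t in (-1:ℝ)..x, g t ^ 2) ≤ I := by
      rw [hIdef, ← intervalIntegral.integral_add_adjacent_intervals (hg2int (-1) x) (hg2int x 1)]
      have : 0 ≤ ∫ t in x..1, g t ^ 2 := by
        apply intervalIntegral.integral_nonneg hx.2
        intro y _; positivity
      linarith
    have hEx : Real.exp (-a * x) * E x ≤ Real.exp a * I := by
      rw [intervalIntegral.integral_const_mul] at hint1
      have := hF0
      simp only [hFdef] at this
      nlinarith [Real.exp_pos a]
    have hle : Real.exp a * I ≤ Real.exp (-a * x) * (C * I) := by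
      rw [hCdef]
      have h1 : Real.exp a = Real.exp (-a * x) * Real.exp (a + a * x) := by
        rw [← Real.exp_add]; ring_nf
      rw [h1, mul_assoc]
      apply mul_le_mul_of_nonneg_left _ (le_of_lt hexp)
      have h2 : Real.exp (a + a * x) ≤ Real.exp (2 * (K + 1)) := by
        apply Real.exp_le_exp.mpr
        have := hx.2
        simp only [hadef]
        nlinarith
      calc Real.exp (a + a * x) * I ≤ Real.exp (2 * (K+1)) * I :=
            mul_le_mul_of_nonneg_right h2 hInonneg
        _ = _ := rfl
    nlinarith [le_trans hEx hle]
  constructor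
  · exact fun x hx => hmain x hx
  -- second part
  · have hφ2 : ∀ x ∈ Icc (-1:ℝ) 1, φ x ^ 2 ≤ C * I / (c * τ ^ 2) := by
      intro x hx
      have h1 : (deriv φ x) ^ 2 + V x * (φ x) ^ 2 ≤ C * I := hmain x hx
      have h2 := hVlb x hx
      have h3 : 0 < c * τ ^ 2 := by positivity
      rw [le_div_iff₀ h3]
      nlinarith [sq_nonneg (deriv φ x), sq_nonneg (φ x)]
    have hφ'2 : ∀ x ∈ Icc (-1:ℝ) 1, (deriv φ x) ^ 2 ≤ C * I := by
      intro x hx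
      have h1 : (deriv φ x) ^ 2 + V x * (φ x) ^ 2 ≤ C * I := hmain x hx
      have h2 := hVlb x hx
      have hVx : (0:ℝ) ≤ V x := le_trans (by positivity) h2
      nlinarith [mul_nonneg hVx (sq_nonneg (φ x))]
    have hτ2 : (0:ℝ) < c * τ ^ 2 := by positivity
    have hintφ : (∫ y in (-1:ℝ)..1, φ y ^ 2) ≤ 2 * (C * I / (c * τ ^ 2)) := by
      have h := intervalIntegral.integral_mono_on
        (f := fun y => φ y ^ 2) (g := fun _ => C * I / (c * τ ^ 2))
        (by norm_num : (-1:ℝ) ≤ 1)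
        ((hφc.pow 2).intervalIntegrable _ _)
        (intervalIntegrable_const (μ := MeasureTheory.volume)) hφ2
      rw [intervalIntegral.integral_const] at h
      simp only [smul_eq_mul] at h
      linarith
    have hintφ' : (∫ y in (-1:ℝ)..1, (deriv φ y) ^ 2) ≤ 2 * (C * I) := by
      have h := intervalIntegral.integral_mono_on
        (f := fun y => (deriv φ y) ^ 2) (g := fun _ => C * I)
        (by norm_num : (-1:ℝ) ≤ 1)
        ((hφ'd.continuous.pow 2).intervalIntegrable _ _)
        (intervalIntegrable_const (μ := MeasureTheory.volume)) hφ'2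
      rw [intervalIntegral.integral_const] at h
      simp only [smul_eq_mul] at h
      linarith
    have hτ0 : (0:ℝ) < τ := lt_of_lt_of_le one_pos hτ
    have hXnn : (0:ℝ) ≤ ∫ y in (-1:ℝ)..1, φ y ^ 2 := by
      apply intervalIntegral.integral_nonneg (by norm_num)
      intro x _; positivity
    have hs1 : τ * Real.sqrt (∫ y in (-1:ℝ)..1, φ y ^ 2)
        ≤ Real.sqrt (2 * C / c) * Real.sqrt I := by
      have e1 : τ * Real.sqrt (∫ y in (-1:ℝ)..1, φ y ^ 2)
          = Real.sqrt (τ ^ 2 * ∫ y in (-1:ℝ)..1, φ y ^ 2) := by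
        rw [Real.sqrt_mul (by positivity), Real.sqrt_sq hτ0.le]
      have e2 : Real.sqrt (2 * C / c) * Real.sqrt I = Real.sqrt (2 * C / c * I) :=
        (Real.sqrt_mul (by positivity) I).symm
      rw [e1, e2]
      apply Real.sqrt_le_sqrt
      have h : τ ^ 2 * (2 * (C * I / (c * τ ^ 2))) = 2 * C / c * I := by
        field_simp
      nlinarith [mul_le_mul_of_nonneg_left hintφ (sq_nonneg τ)]
    have hs2 : Real.sqrt (∫ y in (-1:ℝ)..1, (deriv φ y) ^ 2)
        ≤ Real.sqrt (2 * C) * Real.sqrt I := by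
      have e2 : Real.sqrt (2 * C) * Real.sqrt I = Real.sqrt (2 * C * I) :=
        (Real.sqrt_mul (by positivity) I).symm
      rw [e2]
      apply Real.sqrt_le_sqrt
      linarith [hintφ']
    have : (Real.sqrt (2 * C / c) + Real.sqrt (2 * C)) * Real.sqrt I
        = Real.sqrt (2 * C / c) * Real.sqrt I + Real.sqrt (2 * C) * Real.sqrt I := by ring
    linarith
end
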